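/- Let M be weakly bounded with p < 1 such that 1/M ≤ γ_n ≤ M(n+r)^p and γ_n/γ_{n+1} ≤ M². Then for any function f analytic at u, limsup_{n→∞} |K^n[f](u)/(n!)^{1−p}|^{1/n} ≤ 2M · limsup_{n→∞} |f^{(n)}(u)/(n!)^{1−p}|^{1/n}. -/

import Mathlib

open Filter

/-- The chromatic derivatives associated with recursion coefficients `γ`. -/
noncomputable def chromDeriv (γ : ℕ → ℝ) : ℕ → (ℝ → ℝ) → (ℝ → ℝ)
  | 0, f => f
  | 1, f => fun t => (1 / γ 0) * deriv f t
  | (n + 2), f => fun t =>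
      (1 / γ (n + 1)) * deriv (chromDeriv γ (n + 1) f) t +
        (γ n / γ (n + 1)) * chromDeriv γ n f t

/-- Coefficients expressing `chromDeriv` in terms of ordinary iterated derivatives. -/
noncomputable def ccoef (γ : ℕ → ℝ) : ℕ → ℕ → ℝ
  | 0, 0 => 1
  | 0, _ + 1 => 0
  | 1, 0 => 0
  | 1, 1 => 1 / γ 0
  | 1, _ + 2 => 0
  | (n + 2), 0 => (γ n / γ (n + 1)) * ccoef γ n 0
  | (n + 2), (k + 1) => (1 / γ (n + 1)) * ccoef γ (n + 1) k +
      (γ n / γ (n + 1)) * ccoef γ n (k + 1)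

lemma ccoef_zero_of_lt (γ : ℕ → ℝ) : ∀ n k, n < k → ccoef γ n k = 0
  | 0, k + 1, _ => by simp [ccoef]
  | 1, 0, h => by omega
  | 1, 1, h => by omega
  | 1, k + 2, _ => by simp [ccoef]
  | n + 2, 0, h => by omega
  | n + 2, k + 1, h => by
      rw [ccoef, ccoef_zero_of_lt γ (n + 1) k (by omega),
        ccoef_zero_of_lt γ n (k + 1) (by omega)]
      ring

lemma ccoef_abs (γ : ℕ → ℝ) (hγ : ∀ n, 0 < γ n) (M : ℝ) (hM : 1 ≤ M)
    (hγlow : ∀ n, 1 / M ≤ γ n) (hratio : ∀ n, γ n / γ (n + 1) ≤ M ^ 2) :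
    ∀ n k, |ccoef γ n k| ≤ (2 * M) ^ n
  | 0, 0 => by simp [ccoef]
  | 0, k + 1 => by simp [ccoef]
  | 1, 0 => by simp [ccoef]; nlinarith
  | 1, 1 => by
      have h0 := hγ 0
      have h1 := hγlow 0
      rw [ccoef, abs_of_pos (one_div_pos.mpr (hγ 0)), pow_one]
      rw [div_le_iff₀ h0]
      have hM0 : (0:ℝ) < M := by linarith
      have := (div_le_iff₀ hM0).mp h1
      nlinarith
  | 1, k + 2 => by simp [ccoef]; nlinarith
  | n + 2, 0 => by
      have h1 := ccoef_abs γ hγ M hM hγlow hratio n 0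
      have h2 := hratio n
      have h2' : (0:ℝ) ≤ γ n / γ (n + 1) := le_of_lt (div_pos (hγ n) (hγ (n+1)))
      have hM0 : (0:ℝ) < M := by linarith
      have hp : (0:ℝ) ≤ (2*M)^n := by positivity
      rw [ccoef, abs_mul, abs_of_nonneg h2']
      calc γ n / γ (n+1) * |ccoef γ n 0| ≤ M^2 * (2*M)^n := by
            apply mul_le_mul h2 h1 (abs_nonneg _) (by positivity)
        _ ≤ (2*M)^(n+2) := by
            have hexp : (2*M)^(n+2) = (2*M)^n * (4*(M*M)) := by ring
            rw [hexp]; nlinarith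
  | n + 2, k + 1 => by
      have h1 := ccoef_abs γ hγ M hM hγlow hratio (n+1) k
      have h2 := ccoef_abs γ hγ M hM hγlow hratio n (k+1)
      have hr := hratio n
      have hr' : (0:ℝ) ≤ γ n / γ (n + 1) := le_of_lt (div_pos (hγ n) (hγ (n+1)))
      have hM0 : (0:ℝ) < M := by linarith
      have hg : (0:ℝ) < 1 / γ (n+1) := one_div_pos.mpr (hγ (n+1))
      have hgM : 1 / γ (n+1) ≤ M := by
        rw [div_le_iff₀ (hγ (n+1))]
        have := (div_le_iff₀ hM0).mp (hγlow (n+1))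
        nlinarith
      have hp : (0:ℝ) ≤ (2*M)^n := by positivity
      rw [ccoef]
      calc |1 / γ (n+1) * ccoef γ (n+1) k + γ n / γ (n+1) * ccoef γ n (k+1)|
          ≤ |1 / γ (n+1)| * |ccoef γ (n+1) k| + |γ n / γ (n+1)| * |ccoef γ n (k+1)| := by
            refine (abs_add_le _ _).trans ?_
            rw [abs_mul, abs_mul]
        _ ≤ M * (2*M)^(n+1) + M^2 * (2*M)^n := by
            rw [abs_of_pos hg, abs_of_nonneg hr']
            have t1 : 1 / γ (n+1) * |ccoef γ (n+1) k| ≤ M * (2*M)^(n+1) :=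
              mul_le_mul hgM h1 (abs_nonneg _) hM0.le
            have t2 : γ n / γ (n+1) * |ccoef γ n (k+1)| ≤ M^2 * (2*M)^n :=
              mul_le_mul hr h2 (abs_nonneg _) (by positivity)
            linarith
        _ ≤ (2*M)^(n+2) := by
            have hexp : (2*M)^(n+2) = (2*M)^n * (4*(M*M)) := by ring
            have hexp2 : (2*M)^(n+1) = (2*M)^n * (2*M) := by ring
            rw [hexp, hexp2]; nlinarith

lemma analyticOnNhd_iteratedDeriv {f : ℝ → ℝ} {s : Set ℝ}
    (hfs : AnalyticOnNhd ℝ f s) : ∀ k, AnalyticOnNhd ℝ (iteratedDeriv k f) s := by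
  intro k; induction k with
  | zero => simpa [iteratedDeriv_zero] using hfs
  | succ k ih => rw [iteratedDeriv_succ]; exact ih.deriv

lemma chromDeriv_rep (γ : ℕ → ℝ) (f : ℝ → ℝ) (s : Set ℝ) (hs : IsOpen s)
    (hfs : AnalyticOnNhd ℝ f s) :
    ∀ n, ∀ y ∈ s, chromDeriv γ n f y =
      ∑ k ∈ Finset.range (n + 1), ccoef γ n k * iteratedDeriv k f y
  | 0, y, hy => by simp [chromDeriv, ccoef, iteratedDeriv_zero]
  | 1, y, hy => by
      simp [chromDeriv, Finset.sum_range_succ, ccoef, iteratedDeriv_one]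
  | (n + 2), y, hy => by
      have IH1 : ∀ z ∈ s, chromDeriv γ (n + 1) f z =
          ∑ k ∈ Finset.range (n + 2), ccoef γ (n + 1) k * iteratedDeriv k f z :=
        fun z hz => chromDeriv_rep γ f s hs hfs (n + 1) z hz
      have IH0 := chromDeriv_rep γ f s hs hfs n y hy
      have hEq : chromDeriv γ (n + 1) f =ᶠ[nhds y]
          (fun t => ∑ k ∈ Finset.range (n + 2), ccoef γ (n + 1) k * iteratedDeriv k f t) :=
        Filter.eventuallyEq_of_mem (hs.mem_nhds hy) IH1
      have hderiv : deriv (chromDeriv γ (n + 1) f) y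
          = ∑ k ∈ Finset.range (n + 2), ccoef γ (n + 1) k * iteratedDeriv (k + 1) f y := by
        rw [hEq.deriv_eq, deriv_fun_sum (fun k _ =>
          ((analyticOnNhd_iteratedDeriv hfs k y hy).differentiableAt).const_mul _)]
        refine Finset.sum_congr rfl fun k _ => ?_
        rw [deriv_const_mul _ ((analyticOnNhd_iteratedDeriv hfs k y hy).differentiableAt),
          ← iteratedDeriv_succ]
      show (1 / γ (n + 1)) * deriv (chromDeriv γ (n + 1) f) y +
          (γ n / γ (n + 1)) * chromDeriv γ n f y = _
      rw [hderiv, IH0]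
      rw [Finset.sum_range_succ' (fun k => ccoef γ (n + 2) k * iteratedDeriv k f y) (n + 2),
        Finset.sum_range_succ' (fun k => ccoef γ n k * iteratedDeriv k f y) n]
      have hext : ∑ i ∈ Finset.range (n + 2), ccoef γ n (i + 1) * iteratedDeriv (i + 1) f y
          = ∑ i ∈ Finset.range n, ccoef γ n (i + 1) * iteratedDeriv (i + 1) f y := by
        refine (Finset.sum_subset (Finset.range_subset_range.mpr (by omega)) fun i _ hi => ?_).symm
        rw [ccoef_zero_of_lt γ n (i + 1)
          (by simp only [Finset.mem_range] at hi; omega), zero_mul]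
      simp only [ccoef]
      rw [show (∑ i ∈ Finset.range (n + 2),
            (1 / γ (n + 1) * ccoef γ (n + 1) i + γ n / γ (n + 1) * ccoef γ n (i + 1)) *
              iteratedDeriv (i + 1) f y)
          = (1 / γ (n + 1)) * ∑ i ∈ Finset.range (n + 2),
              ccoef γ (n + 1) i * iteratedDeriv (i + 1) f y
            + (γ n / γ (n + 1)) * ∑ i ∈ Finset.range (n + 2),
              ccoef γ n (i + 1) * iteratedDeriv (i + 1) f y from by
        rw [Finset.mul_sum, Finset.mul_sum, ← Finset.sum_add_distrib]
        exact Finset.sum_congr rfl fun i _ => by ring]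
      rw [hext]
      ring

lemma tendsto_add_two_rpow_one_div :
    Tendsto (fun n : ℕ => ((n : ℝ) + 2) ^ ((1 : ℝ) / n)) atTop (nhds 1) := by
  have hlog : Tendsto (fun n : ℕ => Real.log ((n : ℝ) + 2) / ((n : ℝ) + 2)) atTop (nhds 0) := by
    have h0 : Tendsto (fun x : ℝ => Real.log x / x) atTop (nhds 0) := by
      simpa using Real.tendsto_pow_log_div_mul_add_atTop 1 0 1 one_ne_zero
    exact h0.comp (tendsto_atTop_add_const_right atTop 2 tendsto_natCast_atTop_atTop)
  have hfrac : Tendsto (fun n : ℕ => ((n : ℝ) + 2) / n) atTop (nhds 1) := by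
    have h1 : Tendsto (fun n : ℕ => 1 + 2 / (n : ℝ)) atTop (nhds (1 + 0)) :=
      tendsto_const_nhds.add (tendsto_const_div_atTop_nhds_zero_nat 2)
    rw [add_zero] at h1
    refine h1.congr' ?_
    filter_upwards [eventually_ge_atTop 1] with n hn
    have : (n : ℝ) ≠ 0 := Nat.cast_ne_zero.mpr (by omega)
    field_simp
  have hexp : Tendsto (fun n : ℕ => (1 / (n : ℝ)) * Real.log ((n : ℝ) + 2)) atTop (nhds 0) := by
    have := hlog.mul hfrac
    rw [zero_mul] at this
    refine this.congr' ?_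
    filter_upwards [eventually_ge_atTop 1] with n hn
    have : (n : ℝ) ≠ 0 := Nat.cast_ne_zero.mpr (by omega)
    have h2 : (n : ℝ) + 2 ≠ 0 := by positivity
    field_simp
  have h3 : Tendsto (fun n : ℕ => Real.exp (Real.log ((n : ℝ) + 2) * ((1 : ℝ) / n)))
      atTop (nhds 1) := by
    have := (Real.continuous_exp.tendsto 0).comp hexp
    rw [Real.exp_zero] at this
    refine this.congr fun n => ?_
    simp [Function.comp, mul_comm]
  refine h3.congr fun n => ?_
  rw [← Real.rpow_def_of_pos (by positivity)]

/-- For a weakly bounded moment functional with `p < 1`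
(`1/M ≤ γ_n ≤ M(n+r)^p`, `γ_n/γ_{n+1} ≤ M²`) and `f` analytic at `u`,
`limsup |K^n[f](u)/n!^{1−p}|^{1/n} ≤ 2M · limsup |f^{(n)}(u)/n!^{1−p}|^{1/n}`. -/
theorem chromDeriv_limsup_bound
    (γ : ℕ → ℝ) (hγ : ∀ n, 0 < γ n)
    (M : ℝ) (hM : 1 ≤ M) (r : ℕ) (p : ℝ) (hp : 0 ≤ p) (hp1 : p < 1)
    (hγlow : ∀ n, 1 / M ≤ γ n)
    (hγup : ∀ n, γ n ≤ M * (((n + r : ℕ) : ℝ)) ^ p)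
    (hratio : ∀ n, γ n / γ (n + 1) ≤ M ^ 2)
    (f : ℝ → ℝ) (u : ℝ) (hf : AnalyticAt ℝ f u) :
    Filter.limsup
        (fun n : ℕ => ENNReal.ofReal
          (|chromDeriv γ n f u / ((n.factorial : ℝ)) ^ (1 - p)| ^ ((1 : ℝ) / n)))
        atTop ≤
      ENNReal.ofReal (2 * M) *
        Filter.limsup
          (fun n : ℕ => ENNReal.ofReal
            (|iteratedDeriv n f u / ((n.factorial : ℝ)) ^ (1 - p)| ^ ((1 : ℝ) / n)))
          atTop := by
  classical
  have hM0 : (0:ℝ) < M := lt_of_lt_of_le one_pos hM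
  have h2M : (0:ℝ) < 2 * M := by linarith
  set s : Set ℝ := {x | AnalyticAt ℝ f x} with hs_def
  have hs : IsOpen s := isOpen_analyticAt ℝ f
  have hus : u ∈ s := hf
  have hfs : AnalyticOnNhd ℝ f s := fun y hy => hy
  have key : ∀ n, |chromDeriv γ n f u| ≤
      (2 * M) ^ n * ∑ k ∈ Finset.range (n + 1), |iteratedDeriv k f u| := by
    intro n
    rw [chromDeriv_rep γ f s hs hfs n u hus]
    refine (Finset.abs_sum_le_sum_abs _ _).trans ?_
    rw [Finset.mul_sum]
    refine Finset.sum_le_sum fun k _ => ?_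
    rw [abs_mul]
    exact mul_le_mul_of_nonneg_right (ccoef_abs γ hγ M hM hγlow hratio n k) (abs_nonneg _)
  set A : ℕ → ENNReal := fun n : ℕ => ENNReal.ofReal
    (|chromDeriv γ n f u / ((n.factorial : ℝ)) ^ (1 - p)| ^ ((1 : ℝ) / n)) with hA_def
  set G : ℕ → ENNReal := fun n : ℕ => ENNReal.ofReal
    (|iteratedDeriv n f u / ((n.factorial : ℝ)) ^ (1 - p)| ^ ((1 : ℝ) / n)) with hG_def
  set L : ENNReal := limsup G atTop with hL_def
  rcases eq_or_ne L ⊤ with hLtop | hLne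
  · rw [hLtop, ENNReal.mul_top (by
      simp only [ne_eq, ENNReal.ofReal_eq_zero, not_le]; linarith)]
    exact le_top
  -- Main case : L finite.
  have main : ∀ ε : ℝ, 0 < ε →
      limsup A atTop ≤ ENNReal.ofReal (2 * M) * (L + ENNReal.ofReal ε) := by
    intro ε hε
    set B : ENNReal := L + ENNReal.ofReal ε with hB_def
    have hBne : B ≠ ⊤ := ENNReal.add_ne_top.mpr ⟨hLne, ENNReal.ofReal_ne_top⟩
    have hεB : ENNReal.ofReal ε ≤ B := le_add_self
    have hB0 : B ≠ 0 := by
      intro h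
      rw [h, nonpos_iff_eq_zero, ENNReal.ofReal_eq_zero] at hεB
      linarith
    have hLB : L < B := ENNReal.lt_add_right hLne (by
      simp only [ne_eq, ENNReal.ofReal_eq_zero, not_le]; linarith)
    set Br : ℝ := B.toReal with hBr_def
    have hBr0 : 0 < Br := ENNReal.toReal_pos hB0 hBne
    have hBofReal : ENNReal.ofReal Br = B := ENNReal.ofReal_toReal hBne
    have hev : ∀ᶠ n in atTop, G n < B := eventually_lt_of_limsup_lt hLB
    have hev2 : ∀ᶠ n : ℕ in atTop,
        |iteratedDeriv n f u| ≤ Br ^ n * ((n.factorial : ℝ)) ^ (1 - p) := by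
      filter_upwards [hev, eventually_ge_atTop 1] with n hn hn1
      have hfac : (0:ℝ) < ((n.factorial : ℝ)) ^ (1 - p) := by
        have : (0:ℝ) < (n.factorial : ℝ) := by exact_mod_cast n.factorial_pos
        positivity
      set x : ℝ := |iteratedDeriv n f u / ((n.factorial : ℝ)) ^ (1 - p)| with hx_def
      have hxB : x ^ ((1 : ℝ) / n) < Br := by
        rw [← hBofReal] at hn
        exact (ENNReal.ofReal_lt_ofReal_iff hBr0).mp hn
      have hxlt : x < Br ^ n := by
        have h1 : (x ^ ((1 : ℝ) / n)) ^ n < Br ^ n :=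
          pow_lt_pow_left₀ hxB (Real.rpow_nonneg (abs_nonneg _) _) (by omega)
        rwa [one_div, Real.rpow_inv_natCast_pow (abs_nonneg _) (by omega)] at h1
      have hxval : |iteratedDeriv n f u| = x * ((n.factorial : ℝ)) ^ (1 - p) := by
        rw [hx_def, abs_div, abs_of_pos hfac]
        field_simp
      rw [hxval]
      exact mul_le_mul_of_nonneg_right hxlt.le hfac.le
    obtain ⟨N, hN⟩ := eventually_atTop.mp hev2
    -- threshold for monotonicity of the dominating sequence
    have htend : Tendsto (fun k : ℕ => Br * ((k : ℝ) + 1) ^ (1 - p)) atTop atTop := by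
      refine Tendsto.const_mul_atTop hBr0 ?_
      exact (tendsto_rpow_atTop (by linarith)).comp
        (tendsto_atTop_add_const_right atTop 1 tendsto_natCast_atTop_atTop)
    obtain ⟨K1, hK1⟩ := eventually_atTop.mp (htend.eventually_ge_atTop 2)
    set K : ℕ := max N K1 with hK_def
    set C : ℝ := ∑ k ∈ Finset.range K, |iteratedDeriv k f u| with hC_def
    set v : ℕ → ℝ := fun n => Br ^ n * ((n.factorial : ℝ)) ^ (1 - p) with hv_def
    have hv0 : ∀ n, 0 < v n := by
      intro n
      have : (0:ℝ) < (n.factorial : ℝ) := by exact_mod_cast n.factorial_pos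
      positivity
    have hvratio : ∀ k, K ≤ k → 2 * v k ≤ v (k + 1) := by
      intro k hk
      have h2 : 2 ≤ Br * ((k : ℝ) + 1) ^ (1 - p) := hK1 k (le_trans (le_max_right N K1) hk)
      have hval : v (k + 1) = v k * (Br * ((k : ℝ) + 1) ^ (1 - p)) := by
        simp only [hv_def]
        rw [Nat.factorial_succ, pow_succ]
        push_cast
        rw [Real.mul_rpow (by positivity) (by positivity)]
        ring
      rw [hval]
      nlinarith [hv0 k]
    have hvmono : ∀ k n, K ≤ k → k ≤ n → v k ≤ v n := by
      intro k n hk hkn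
      induction n, hkn using Nat.le_induction with
      | base => exact le_rfl
      | succ n hn ih =>
        have := hvratio n (hk.trans hn)
        nlinarith [hv0 n]
    have hgrow : ∀ j, 2 ^ j * v K ≤ v (K + j) := by
      intro j
      induction j with
      | zero => simp
      | succ j ih =>
        have := hvratio (K + j) (Nat.le_add_right K j)
        have h2j : (0:ℝ) < 2 ^ j := by positivity
        calc 2 ^ (j + 1) * v K = 2 * (2 ^ j * v K) := by ring
          _ ≤ 2 * v (K + j) := by nlinarith
          _ ≤ v (K + j + 1) := this
    obtain ⟨j0, hj0⟩ := pow_unbounded_of_one_lt (C / v K) (one_lt_two (α := ℝ))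
    have hCv : ∀ n, K + j0 ≤ n → C ≤ v n := by
      intro n hn
      have h1 : C ≤ 2 ^ j0 * v K := by
        rw [div_lt_iff₀ (hv0 K)] at hj0
        nlinarith [hv0 K]
      exact h1.trans ((hgrow j0).trans (hvmono (K + j0) n (Nat.le_add_right K j0) hn))
    -- the eventual bound on A
    have hA : ∀ᶠ n in atTop, A n ≤
        ENNReal.ofReal (2 * M * Br * (((n : ℝ) + 2) ^ ((1 : ℝ) / n))) := by
      filter_upwards [eventually_ge_atTop (max (K + j0) 1)] with n hn
      have hn1 : 1 ≤ n := le_trans (le_max_right _ 1) hn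
      have hnK : K + j0 ≤ n := le_trans (le_max_left _ 1) hn
      have hKn : K ≤ n + 1 := by omega
      have hfac : (0:ℝ) < ((n.factorial : ℝ)) ^ (1 - p) := by
        have : (0:ℝ) < (n.factorial : ℝ) := by exact_mod_cast n.factorial_pos
        positivity
      have hsum : ∑ k ∈ Finset.range (n + 1), |iteratedDeriv k f u| ≤ ((n : ℝ) + 2) * v n := by
        have hsplit : ∑ k ∈ Finset.range (n + 1), |iteratedDeriv k f u|
            = C + ∑ k ∈ Finset.Ico K (n + 1), |iteratedDeriv k f u| := by
          rw [hC_def, Finset.range_eq_Ico,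
            ← Finset.sum_Ico_consecutive _ (Nat.zero_le K) hKn, ← Finset.range_eq_Ico]
        have hterm : ∀ k ∈ Finset.Ico K (n + 1), |iteratedDeriv k f u| ≤ v n := by
          intro k hk
          rw [Finset.mem_Ico] at hk
          have hkN : N ≤ k := le_trans (le_max_left N K1) hk.1
          exact (hN k hkN).trans (hvmono k n hk.1 (by omega))
        have hsum2 : ∑ k ∈ Finset.Ico K (n + 1), |iteratedDeriv k f u|
            ≤ (n + 1 - K : ℕ) * v n := by
          have := Finset.sum_le_card_nsmul (Finset.Ico K (n + 1)) _ (v n) hterm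
          rwa [Nat.card_Ico, nsmul_eq_mul] at this
        have hcard : ((n + 1 - K : ℕ) : ℝ) ≤ (n : ℝ) + 1 := by
          have : (n + 1 - K : ℕ) ≤ n + 1 := by omega
          exact_mod_cast this
        have hCn : C ≤ v n := hCv n hnK
        calc ∑ k ∈ Finset.range (n + 1), |iteratedDeriv k f u|
            = C + ∑ k ∈ Finset.Ico K (n + 1), |iteratedDeriv k f u| := hsplit
          _ ≤ v n + ((n : ℝ) + 1) * v n := by
              have := mul_le_mul_of_nonneg_right hcard (hv0 n).le
              nlinarith [hsum2, hCn]
          _ = ((n : ℝ) + 2) * v n := by ring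
      have hq : |chromDeriv γ n f u / ((n.factorial : ℝ)) ^ (1 - p)|
          ≤ (2 * M * Br) ^ n * ((n : ℝ) + 2) := by
        rw [abs_div, abs_of_pos hfac, div_le_iff₀ hfac]
        calc |chromDeriv γ n f u|
            ≤ (2 * M) ^ n * ∑ k ∈ Finset.range (n + 1), |iteratedDeriv k f u| := key n
          _ ≤ (2 * M) ^ n * (((n : ℝ) + 2) * v n) :=
              mul_le_mul_of_nonneg_left hsum (by positivity)
          _ = (2 * M * Br) ^ n * ((n : ℝ) + 2) * ((n.factorial : ℝ)) ^ (1 - p) := by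
              simp only [hv_def, mul_pow]; ring
      have hrpow : |chromDeriv γ n f u / ((n.factorial : ℝ)) ^ (1 - p)| ^ ((1 : ℝ) / n)
          ≤ 2 * M * Br * (((n : ℝ) + 2) ^ ((1 : ℝ) / n)) := by
        have h1 : |chromDeriv γ n f u / ((n.factorial : ℝ)) ^ (1 - p)| ^ ((1 : ℝ) / n)
            ≤ ((2 * M * Br) ^ n * ((n : ℝ) + 2)) ^ ((1 : ℝ) / n) :=
          Real.rpow_le_rpow (abs_nonneg _) hq (by positivity)
        refine h1.trans ?_
        rw [Real.mul_rpow (by positivity) (by positivity), one_div,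
          Real.pow_rpow_inv_natCast (by positivity) (by omega)]
      exact ENNReal.ofReal_le_ofReal hrpow
    have hlim : Tendsto (fun n : ℕ => ENNReal.ofReal (2 * M * Br * (((n : ℝ) + 2) ^ ((1 : ℝ) / n))))
        atTop (nhds (ENNReal.ofReal (2 * M * Br))) := by
      have h1 : Tendsto (fun n : ℕ => 2 * M * Br * (((n : ℝ) + 2) ^ ((1 : ℝ) / n)))
          atTop (nhds (2 * M * Br)) := by
        have := tendsto_const_nhds (x := 2 * M * Br) (f := atTop (α := ℕ)) |>.mul
          tendsto_add_two_rpow_one_div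
        rwa [mul_one] at this
      exact (ENNReal.continuous_ofReal.tendsto _).comp h1
    calc limsup A atTop
        ≤ limsup (fun n : ℕ =>
            ENNReal.ofReal (2 * M * Br * (((n : ℝ) + 2) ^ ((1 : ℝ) / n)))) atTop :=
          limsup_le_limsup hA
      _ = ENNReal.ofReal (2 * M * Br) := hlim.limsup_eq
      _ = ENNReal.ofReal (2 * M) * ENNReal.ofReal Br := ENNReal.ofReal_mul h2M.le
      _ = ENNReal.ofReal (2 * M) * B := by rw [hBofReal]
  refine ENNReal.le_of_forall_pos_le_add fun δ hδ hfin => ?_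
  have hδ' : (0:ℝ) < (δ : ℝ) / (2 * M) := by positivity
  calc limsup A atTop ≤ ENNReal.ofReal (2 * M) * (L + ENNReal.ofReal ((δ : ℝ) / (2 * M))) :=
        main _ hδ'
    _ = ENNReal.ofReal (2 * M) * L + ENNReal.ofReal (2 * M) * ENNReal.ofReal ((δ : ℝ) / (2 * M)) := by
        rw [mul_add]
    _ = ENNReal.ofReal (2 * M) * L + δ := by
        rw [← ENNReal.ofReal_mul h2M.le]
        congr 1
        rw [show 2 * M * ((δ : ℝ) / (2 * M)) = (δ : ℝ) by field_simp]
        exact ENNReal.ofReal_coe_nnreal
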